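/- In HH_N(q,t), with D_i = T_{i−1}^{-1}⋯T_1^{-1} X_1^{-1}(Y_1−1) T_1^{-1}⋯T_{i−1}^{-1}, one has X_1 D_2 = D_2 T_1² X_1 + (𝐭 − 𝐭^{-1}) T_1^{-1} and D_1 X_2 = X_2 T_1^{-2} D_1 − (𝐭 − 𝐭^{-1}) T_1. -/

import Mathlib

/- STATEMENT 10: In HH_N(q,t), with D_i = T_{i−1}^{-1}⋯T_1^{-1}X_1^{-1}(Y_1−1)T_1^{-1}⋯T_{i−1}^{-1},
one has X_1D_2 = D_2T_1²X_1 + (𝐭 − 𝐭^{-1})T_1^{-1} and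
D_1X_2 = X_2T_1^{-2}D_1 − (𝐭 − 𝐭^{-1})T_1. -/

/-- Cherednik's double affine Hecke algebra HH_N(q,t), t = 𝐭², presented by the
relations (R1)–(R12); an algebra A together with elements satisfying the
relations (generators indexed 1,…,N resp. 1,…,N−1). -/
structure DAHA (N : ℕ) (q bt : ℂ) (A : Type*) [Ring A] [Algebra ℂ A] where
  T : ℕ → A
  Tinv : ℕ → A
  X : ℕ → A
  Xinv : ℕ → A
  Y : ℕ → A
  Yinv : ℕ → A
  hT : ∀ i, 1 ≤ i → i ≤ N - 1 → T i * Tinv i = 1 ∧ Tinv i * T i = 1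
  hX : ∀ i, 1 ≤ i → i ≤ N → X i * Xinv i = 1 ∧ Xinv i * X i = 1
  hY : ∀ i, 1 ≤ i → i ≤ N → Y i * Yinv i = 1 ∧ Yinv i * Y i = 1
  R1 : ∀ i, 1 ≤ i → i ≤ N - 1 →
    (T i - algebraMap ℂ A bt) * (T i + algebraMap ℂ A bt⁻¹) = 0
  R2 : ∀ i, 1 ≤ i → i + 1 ≤ N - 1 → T i * T (i + 1) * T i = T (i + 1) * T i * T (i + 1)
  R3 : ∀ i j, 1 ≤ i → i ≤ N - 1 → 1 ≤ j → j ≤ N - 1 → i + 2 ≤ j → T i * T j = T j * T i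
  R4 : ∀ i, 1 ≤ i → i ≤ N - 1 → T i * X i * T i = X (i + 1)
  R5 : ∀ i j, 1 ≤ i → i ≤ N - 1 → 1 ≤ j → j ≤ N → j ≠ i → j ≠ i + 1 → T i * X j = X j * T i
  R6 : ∀ i, 1 ≤ i → i ≤ N - 1 → T i * Y i * T i = Y (i + 1)
  R7 : ∀ i j, 1 ≤ i → i ≤ N - 1 → 1 ≤ j → j ≤ N → j ≠ i → j ≠ i + 1 → T i * Y j = Y j * T i
  R8 : 2 ≤ N → Xinv 1 * Yinv 2 * X 1 * Y 2 = T 1 * T 1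
  R9 : ∀ i, 1 ≤ i → i ≤ N →
    Y i * (((List.range N).map (fun j => X (j + 1))).prod)
      = algebraMap ℂ A q * ((((List.range N).map (fun j => X (j + 1))).prod) * Y i)
  R10 : ∀ i, 1 ≤ i → i ≤ N →
    X i * (((List.range N).map (fun j => Y (j + 1))).prod)
      = algebraMap ℂ A q⁻¹ * ((((List.range N).map (fun j => Y (j + 1))).prod) * X i)
  R11 : ∀ i j, 1 ≤ i → i ≤ N → 1 ≤ j → j ≤ N → X i * X j = X j * X i
  R12 : ∀ i j, 1 ≤ i → i ≤ N → 1 ≤ j → j ≤ N → Y i * Y j = Y j * Y i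

noncomputable def DAHA.D {N : ℕ} {q bt : ℂ} {A : Type*} [Ring A] [Algebra ℂ A]
    (H : DAHA N q bt A) (i : ℕ) : A :=
  (((List.range (i - 1)).reverse.map (fun j => H.Tinv (j + 1))).prod) *
    (H.Xinv 1 * (H.Y 1 - 1)) *
    (((List.range (i - 1)).map (fun j => H.Tinv (j + 1))).prod)

theorem statement10 {A : Type*} [Ring A] [Algebra ℂ A] (N : ℕ) (q bt : ℂ)
    (hN : 2 ≤ N) (H : DAHA N q bt A) :
    H.X 1 * H.D 2 = H.D 2 * H.T 1 * H.T 1 * H.X 1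
        + algebraMap ℂ A (bt - bt⁻¹) * H.Tinv 1 ∧
    H.D 1 * H.X 2 = H.X 2 * H.Tinv 1 * H.Tinv 1 * H.D 1
        - algebraMap ℂ A (bt - bt⁻¹) * H.T 1 := by
  have hN1 : 1 ≤ N - 1 := by omega
  obtain ⟨ts, st⟩ := H.hT 1 le_rfl hN1
  obtain ⟨xxi, xix⟩ := H.hX 1 le_rfl (by omega)
  obtain ⟨y2yi2, yi2y2⟩ := H.hY 2 (by omega) (by omega)
  set t := H.T 1 with ht
  set s := H.Tinv 1 with hs
  set x := H.X 1 with hx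
  set xi := H.Xinv 1 with hxi
  set y := H.Y 1 with hy
  set y2 := H.Y 2 with hy2'
  set yi2 := H.Yinv 2 with hyi2'
  set c : A := algebraMap ℂ A (bt - bt⁻¹) with hc
  -- commuting of c with everything
  have hcc : ∀ a : A, c * a = a * c := fun a => (Algebra.commutes _ a)
  -- cancellation lemmas
  have Lst : ∀ a : A, s * (t * a) = a := fun a => by rw [← mul_assoc, st, one_mul]
  have Lts : ∀ a : A, t * (s * a) = a := fun a => by rw [← mul_assoc, ts, one_mul]
  have Lxxi : ∀ a : A, x * (xi * a) = a := fun a => by rw [← mul_assoc, xxi, one_mul]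
  have Lxix : ∀ a : A, xi * (x * a) = a := fun a => by rw [← mul_assoc, xix, one_mul]
  have Ly2 : ∀ a : A, y2 * (yi2 * a) = a := fun a => by rw [← mul_assoc, y2yi2, one_mul]
  have Lyi2 : ∀ a : A, yi2 * (y2 * a) = a := fun a => by rw [← mul_assoc, yi2y2, one_mul]
  -- key quadratic relation: t = c + s
  have key : t = c + s := by
    by_cases hbt : bt = 0
    · have r1 := H.R1 1 le_rfl hN1
      rw [← ht, hbt] at r1
      simp only [inv_zero, map_zero, sub_zero, add_zero] at r1
      have h10 : (1 : A) = 0 := by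
        have : s * (t * t) * s = 0 := by rw [r1, mul_zero, zero_mul]
        rw [← mul_assoc, st, one_mul, ts] at this
        exact this
      have hz : ∀ a : A, a = 0 := fun a => by rw [← mul_one a, h10, mul_zero]
      rw [hz t, hz (c + s)]
    · have hbb : algebraMap ℂ A bt * algebraMap ℂ A bt⁻¹ = 1 := by
        rw [← map_mul, mul_inv_cancel₀ hbt, map_one]
      have hcom : t * algebraMap ℂ A bt⁻¹ = algebraMap ℂ A bt⁻¹ * t :=
        (Algebra.commutes _ _).symm
      have r1 := H.R1 1 le_rfl hN1
      rw [← ht] at r1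
      have expand : (t - algebraMap ℂ A bt) * (t + algebraMap ℂ A bt⁻¹)
          = t * t - (c * t + 1) := by
        rw [hc, map_sub, sub_mul, mul_add, mul_add, hcom, hbb, sub_mul]
        abel
      rw [expand, sub_eq_zero] at r1
      have := congrArg (fun z => s * z) r1
      simp only [mul_add, mul_one] at this
      rw [← mul_assoc, ← mul_assoc, st, one_mul, ← hcc s, mul_assoc, st, mul_one] at this
      exact this
  -- X2 and Y2 expressions
  have hX2 : H.X 2 = t * x * t := (H.R4 1 le_rfl hN1).symm
  have hY2 : y2 = t * y * t := (H.R6 1 le_rfl hN1).symm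
  -- x commutes with X2⁻¹ = s * (xi * s)
  have hXX := H.R11 1 2 le_rfl (by omega) (by omega) (by omega)
  rw [hX2, ← hx] at hXX
  have hc1 : x * (s * (xi * s)) = s * (xi * s) * x := by
    have hcomm : Commute (⟨x, xi, xxi, xix⟩ : Aˣ) ⟨t * x * t, s * (xi * s), by
        simp only [mul_assoc, Lts, Lxxi, ts], by
        simp only [mul_assoc, Lst, Lxix, st]⟩ :=
      Units.ext (by simpa using hXX)
    have := congrArg Units.val hcomm.inv_right
    simpa using this
  have e1 : x * (s * xi) = s * (xi * (s * (x * t))) := by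
    have := congrArg (fun z => z * t) hc1
    simp only [mul_assoc, st, mul_one] at this
    exact this
  have e1' : ∀ a : A, x * (s * (xi * a)) = s * (xi * (s * (x * (t * a)))) := by
    intro a
    have := congrArg (fun z => z * a) e1
    simp only [mul_assoc] at this
    exact this
  -- the dagger relation from R8
  have hdag : x * (t * y) = t * (y * (t * (x * t))) := by
    have r8 := H.R8 hN
    rw [← ht, ← hx, ← hxi, ← hy2', ← hyi2'] at r8
    have step1 : yi2 * (x * y2) = x * (t * t) := by
      have := congrArg (fun z => x * z) r8
      simp only [mul_assoc, Lxxi] at this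
      simpa [mul_assoc] using this
    have step2 : x * y2 = y2 * (x * (t * t)) := by
      have := congrArg (fun z => y2 * z) step1
      simp only [Ly2] at this
      exact this
    rw [hY2] at step2
    have := congrArg (fun z => z * s) step2
    simp only [mul_assoc, ts, mul_one] at this
    exact this
  have hdag' : ∀ a : A, x * (t * (y * a)) = t * (y * (t * (x * (t * a)))) := by
    intro a
    have := congrArg (fun z => z * a) hdag
    simp only [mul_assoc] at this
    exact this
  -- the four word identities
  have W1 : x * (s * (xi * (y * s))) = s * (xi * (y * (t * x))) := by
    rw [e1' (y * s), hdag' s]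
    simp only [Lst, ts, mul_one]
  have W2 : s * (xi * (t * x)) = x * (s * (xi * s)) + c * s := by
    rw [key, hc1]
    have : (c + s) * x = x * c + s * x := by rw [add_mul, hcc]
    rw [this, mul_add, mul_add, ← mul_assoc xi x c, xix, one_mul, ← hcc s]
    simp only [mul_assoc]
    abel
  have W3 : xi * (y * (t * (x * t))) = t * (x * (s * (xi * y))) := by
    rw [e1' y, Lts, hdag, Lst]
  have W4 : xi * (t * (x * t)) = t * (x * (s * xi)) + c * t := by
    rw [e1, Lts]
    nth_rewrite 1 [key]
    rw [add_mul, mul_add, hcc (x * t)]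
    simp only [mul_assoc]
    rw [Lxix, ← hcc t]
    abel
  -- now assemble
  have hD2 : H.D 2 = s * (xi * (y - 1)) * s := by
    simp [DAHA.D, List.range_succ]
    rfl
  have hD1 : H.D 1 = xi * (y - 1) := by
    simp [DAHA.D]
    rfl
  constructor
  · rw [hD2]
    simp only [mul_sub, sub_mul, mul_one, one_mul, mul_assoc, Lst, Lts]
    rw [W1, W2]
    abel
  · rw [hD1, hX2]
    simp only [mul_sub, sub_mul, mul_one, one_mul, mul_assoc, Lts, Lst]
    rw [W3, W4]
    abel
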